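/- (Acyclic Digicomp counters.) For every integer k ≥ 1 there exists an acyclic switch graph with at most ⌊log₂ k⌋ + 3 vertices, containing an entry vertex c and two distinct absorbing vertices F and D, such that when balls are released sequentially from c in the Digicomp process, each of the first k − 1 balls stops at F and the k-th ball stops at D. -/

import Mathlib

open scoped Classical

variable {V : Type*}

/-- One step of the train: move along the edge given by the current switch state
and toggle the switch at the current vertex. -/
def step [DecidableEq V] (s0 s1 : V → V) (c : V × (V → Bool)) : V × (V → Bool) :=
  (if c.2 c.1 then s1 c.1 else s0 c.1, Function.update c.2 c.1 (!c.2 c.1))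

/-- A vertex is absorbing if both of its out-edges are self-loops. -/
def Absorbing (s0 s1 : V → V) (v : V) : Prop := s0 v = v ∧ s1 v = v

/-- The step map of a ball: it stops (configuration frozen, no toggle) at an absorbing
vertex, and otherwise moves by the step map. -/
def stepD [DecidableEq V] (s0 s1 : V → V) (c : V × (V → Bool)) : V × (V → Bool) :=
  if s0 c.1 = c.1 ∧ s1 c.1 = c.1 then c else step s0 s1 c

/-- The switch assignment left behind by one ball released at `st` with initial
assignment `σ`: the assignment when the ball first reaches an absorbing vertex
(junk value `σ` if it never does). -/
noncomputable def ballFinal [DecidableEq V] (s0 s1 : V → V) (st : V) (σ : V → Bool) :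
    V → Bool :=
  if h : ∃ k, Absorbing s0 s1 ((stepD s0 s1)^[k] (st, σ)).1 then
    ((stepD s0 s1)^[Nat.find h] (st, σ)).2
  else σ

/-- The switch assignment after `i` balls have been released sequentially from `st`
(the first ball sees all switches `0`). -/
noncomputable def sigmaAfter [DecidableEq V] (s0 s1 : V → V) (st : V) :
    ℕ → (V → Bool)
  | 0 => fun _ => false
  | i + 1 => ballFinal s0 s1 st (sigmaAfter s0 s1 st i)

/-- The configuration of the `i`-th ball (0-indexed) after `k` of its own steps. -/
noncomputable def ballConfig [DecidableEq V] (s0 s1 : V → V) (st : V) (i k : ℕ) :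
    V × (V → Bool) :=
  (stepD s0 s1)^[k] (st, sigmaAfter s0 s1 st i)


/-- A switch graph is acyclic if every directed cycle (a closed edge-sequence of
positive length) is trivial, i.e. all its vertices are equal (only self-loops). -/
def IsAcyclicSG (s0 s1 : V → V) : Prop :=
  ∀ (k : ℕ) (v : ℕ → V), 1 ≤ k → v k = v 0 →
    (∀ j < k, v (j + 1) = s0 (v j) ∨ v (j + 1) = s1 (v j)) →
    ∀ j ≤ k, v j = v 0

namespace DigicompAux

def g0 (m B : ℕ) : Fin (m+2) → Fin (m+2) := fun v =>
  if h : v.val < m then (if B.testBit v.val then ⟨v.val+1, by omega⟩ else ⟨m+1, by omega⟩) else v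

def g1 (m B : ℕ) : Fin (m+2) → Fin (m+2) := fun v =>
  if h : v.val < m then (if B.testBit v.val then ⟨m+1, by omega⟩ else ⟨v.val+1, by omega⟩) else v

lemma edge_mono (m B : ℕ) (u w : Fin (m+2)) (h : w = g0 m B u ∨ w = g1 m B u) :
    u.val < w.val ∨ w = u := by
  rcases h with h | h <;> subst h <;> simp only [g0, g1] <;>
    split_ifs with h1 h2 <;>
      first
        | (right; rfl)
        | (left; exact Nat.lt_succ_self _)
        | (left; show u.val < m + 1; omega)

lemma acyc (m B : ℕ) : IsAcyclicSG (g0 m B) (g1 m B) := by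
  intro K v hK hvK hedge
  have mono : ∀ j < K, (v j).val < (v (j+1)).val ∨ v (j+1) = v j := by
    intro j hj
    exact edge_mono m B (v j) (v (j+1)) (hedge j hj)
  have le2 : ∀ d a, a + d ≤ K → (v a).val ≤ (v (a + d)).val := by
    intro d
    induction d with
    | zero => intro a _; simp
    | succ n ih =>
      intro a ha
      have h1 := ih a (by omega)
      have h2 := mono (a + n) (by omega)
      have h3 : (v (a+n)).val ≤ (v (a+n+1)).val := by
        rcases h2 with h | h
        · omega
        · rw [h]
      calc (v a).val ≤ (v (a+n)).val := h1
        _ ≤ (v (a + (n+1))).val := by rw [show a + (n+1) = a + n + 1 by omega]; exact h3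
  have hval : ∀ j ≤ K, (v j).val = (v 0).val := by
    intro j hj
    have h1 : (v 0).val ≤ (v j).val := by simpa using le2 j 0 (by omega)
    have h2 : (v j).val ≤ (v K).val := by
      have := le2 (K - j) j (by omega)
      rwa [show j + (K - j) = K by omega] at this
    rw [hvK] at h2
    omega
  intro j hj
  induction j with
  | zero => rfl
  | succ n ih =>
    have hn := ih (by omega)
    rcases mono n (by omega) with h | h
    · exfalso
      have e1 := hval n (by omega)
      have e2 := hval (n+1) (by omega)
      omega
    · rw [h, hn]

lemma abs_of_ge (m B : ℕ) (v : Fin (m+2)) (hv : m ≤ v.val) :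
    Absorbing (g0 m B) (g1 m B) v :=
  ⟨dif_neg (by omega), dif_neg (by omega)⟩

lemma g0_val (m B : ℕ) (t : ℕ) (ht : t < m) :
    (g0 m B ⟨t, by omega⟩ : Fin (m+2)).val = t + 1 ∨ (g0 m B ⟨t, by omega⟩ : Fin (m+2)).val = m + 1 := by
  simp only [g0]
  rw [dif_pos (show ((⟨t, by omega⟩ : Fin (m+2))).val < m from ht)]
  split_ifs <;> simp

lemma not_abs (m B : ℕ) (t : ℕ) (ht : t < m) :
    ¬ Absorbing (g0 m B) (g1 m B) ⟨t, by omega⟩ := by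
  rintro ⟨h1, -⟩
  apply_fun Fin.val at h1
  have hv : ((⟨t, by omega⟩ : Fin (m+2))).val = t := rfl
  rw [hv] at h1
  rcases g0_val m B t ht with h | h <;> rw [h1] at h <;> omega

lemma stepD_at (m B : ℕ) (l : ℕ) (hlm : l < m) (τ : Fin (m+2) → Bool) :
    stepD (g0 m B) (g1 m B) (⟨l, by omega⟩, τ)
      = ((if τ ⟨l, by omega⟩ != B.testBit l then (⟨l+1, by omega⟩ : Fin (m+2))
          else ⟨m+1, by omega⟩),
         Function.update τ ⟨l, by omega⟩ (!τ ⟨l, by omega⟩)) := by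
  have hne := not_abs m B l hlm
  have hcond : ¬ (g0 m B ((⟨l, by omega⟩ : Fin (m+2)), τ).1 = ((⟨l, by omega⟩ : Fin (m+2)), τ).1
      ∧ g1 m B ((⟨l, by omega⟩ : Fin (m+2)), τ).1 = ((⟨l, by omega⟩ : Fin (m+2)), τ).1) := hne
  rw [stepD, if_neg hcond]
  simp only [step]
  refine Prod.ext ?_ ?_
  · show (if τ ⟨l, by omega⟩ then g1 m B ⟨l, by omega⟩ else g0 m B ⟨l, by omega⟩) = _
    cases hτ : τ ⟨l, by omega⟩ <;> cases hB : B.testBit l <;>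
      simp [g0, g1, hlm, hB]
  · rfl

lemma update_tog (m : ℕ) (σ : Fin (m+2) → Bool) (l : ℕ) (hl : l < m) (b : Bool)
    (hb : b = !σ ⟨l, by omega⟩) :
    Function.update (fun w : Fin (m+2) => if w.val < l then !σ w else σ w) ⟨l, by omega⟩ b
      = fun w => if w.val < l + 1 then !σ w else σ w := by
  subst hb
  funext w
  rw [Function.update_apply]
  by_cases hw : w = ⟨l, by omega⟩
  · subst hw; simp
  · rw [if_neg hw]
    have hwl : w.val ≠ l := fun h => hw (Fin.ext h)
    by_cases h2 : w.val < l
    · rw [if_pos h2, if_pos (by omega)]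
    · rw [if_neg h2, if_neg (by omega : ¬ w.val < l + 1)]

lemma traj (m B : ℕ) (σ : Fin (m+2) → Bool) (N : ℕ)
    (hσ : ∀ j (hj : j < m), σ ⟨j, by omega⟩ = (N.testBit j != B.testBit j)) :
    ∀ l (hl : l ≤ m) (hb : ∀ j, j < l → N.testBit j = true),
    (stepD (g0 m B) (g1 m B))^[l] (⟨0, by omega⟩, σ)
      = (⟨l, by omega⟩, fun w => if w.val < l then !σ w else σ w) := by
  intro l
  induction l with
  | zero => intro _ _; simp
  | succ l ih =>
    intro hl hbits
    have hlm : l < m := by omega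
    rw [Function.iterate_succ_apply', ih (by omega) (fun j hj => hbits j (by omega))]
    rw [stepD_at m B l hlm]
    have hτ : (if ((⟨l, by omega⟩ : Fin (m+2)).val < l) then !σ ⟨l, by omega⟩
        else σ ⟨l, by omega⟩) = σ ⟨l, by omega⟩ := by simp
    refine Prod.ext ?_ ?_
    · show (if _ != B.testBit l then _ else _) = _
      rw [hτ, hσ l hlm, hbits l (by omega)]
      cases hB : B.testBit l <;> rfl
    · show Function.update _ _ _ = _
      exact update_tog m σ l hlm _ (by rw [hτ])



lemma bnot_bne (x y : Bool) : (!(x != y)) = ((!x) != y) := by cases x <;> cases y <;> rfl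

lemma succ_testBit (N T : ℕ) (hb : ∀ j, j < T → N.testBit j = true)
    (h0 : N.testBit T = false) (j : ℕ) :
    (N+1).testBit j = if j ≤ T then !N.testBit j else N.testBit j := by
  have hmod : N % 2^(T+1) = 2^T - 1 := by
    apply Nat.eq_of_testBit_eq
    intro i
    rw [Nat.testBit_mod_two_pow, Nat.testBit_two_pow_sub_one]
    rcases lt_trichotomy i T with h | h | h
    · simp [hb i h, show i < T+1 by omega, h]
    · subst h; simp [h0]
    · simp [show ¬ i < T+1 by omega, show ¬ i < T by omega]
  have h1 : 1 ≤ 2^T := Nat.one_le_two_pow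
  have hsplit : N + 1 = 2^(T+1) * (N / 2^(T+1)) + 2^T := by
    have h2 := Nat.div_add_mod N (2^(T+1))
    omega
  by_cases hj : j ≤ T
  · rw [if_pos hj]
    have e1 : (N+1).testBit j = ((N+1) % 2^(T+1)).testBit j := by
      rw [Nat.testBit_mod_two_pow]
      simp [show j < T+1 by omega]
    have e2 : (N+1) % 2^(T+1) = 2^T := by
      rw [hsplit, Nat.mul_add_mod]
      exact Nat.mod_eq_of_lt (by
        have := Nat.pow_lt_pow_succ (a := 2) (by norm_num) (n := T)
        omega)
    rw [e1, e2, Nat.testBit_two_pow]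
    rcases eq_or_lt_of_le hj with h | h
    · subst h; simp [h0]
    · simp [hb j h, show ¬ (T = j) by omega]
  · rw [if_neg hj]
    have hpow : 2^(T+1) * 2^(j-(T+1)) = 2^j := by
      rw [← pow_add]
      congr 1
      omega
    have hq : (N+1) / 2^(T+1) = N / 2^(T+1) := by
      conv_lhs => rw [hsplit]
      rw [Nat.mul_add_div (Nat.pow_pos (by norm_num))]
      have h2T : 2^T < 2^(T+1) := by
        have := Nat.pow_lt_pow_succ (a := 2) (by norm_num) (n := T)
        omega
      rw [Nat.div_eq_of_lt h2T, Nat.add_zero]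
    have hdiv : (N+1) / 2^j = N / 2^j := by
      rw [← hpow, ← Nat.div_div_eq_div_mul, ← Nat.div_div_eq_div_mul, hq]
    rw [Nat.testBit_eq_decide_div_mod_eq, Nat.testBit_eq_decide_div_mod_eq, hdiv]

lemma ge_of_all_bits (N m : ℕ) (h : ∀ j, j < m → N.testBit j = true) : 2^m - 1 ≤ N := by
  have hmod : N % 2^m = 2^m - 1 := by
    apply Nat.eq_of_testBit_eq
    intro i
    rw [Nat.testBit_mod_two_pow, Nat.testBit_two_pow_sub_one]
    by_cases hi : i < m
    · simp [hi, h i hi]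
    · simp [hi]
  calc 2^m - 1 = N % 2^m := hmod.symm
    _ ≤ N := Nat.mod_le N _

lemma ball_aux (m B : ℕ) (σ : Fin (m+2) → Bool) (N : ℕ)
    (hσ : ∀ j (hj : j < m), σ ⟨j, by omega⟩ = (N.testBit j != B.testBit j)) :
    (∃ K, ((stepD (g0 m B) (g1 m B))^[K] (⟨0, by omega⟩, σ)).1
        = if (∀ j, j < m → N.testBit j = true) then (⟨m, by omega⟩ : Fin (m+2))
          else ⟨m+1, by omega⟩)
    ∧ ∀ j (hj : j < m), ballFinal (g0 m B) (g1 m B) ⟨0, by omega⟩ σ ⟨j, by omega⟩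
        = ((N+1).testBit j != B.testBit j) := by
  have hexb : ∃ t, N.testBit t = false :=
    ⟨N, Nat.testBit_lt_two_pow (Nat.lt_two_pow_self (n := N))⟩
  set T := Nat.find hexb with hT
  have hT0 : N.testBit T = false := Nat.find_spec hexb
  have hTb : ∀ j, j < T → N.testBit j = true := by
    intro j hj
    have := Nat.find_min hexb hj
    simpa using this
  by_cases hc : T < m
  · -- exits to F at step T+1
    have hnall : ¬ (∀ j, j < m → N.testBit j = true) := by
      intro hall
      rw [hall T hc] at hT0
      exact Bool.noConfusion hT0
    have htrajT := traj m B σ N hσ T (by omega) hTb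
    have hτ : (if ((⟨T, by omega⟩ : Fin (m+2)).val < T) then !σ ⟨T, by omega⟩
        else σ ⟨T, by omega⟩) = σ ⟨T, by omega⟩ := by simp
    have hstep : (stepD (g0 m B) (g1 m B))^[T+1] (⟨0, by omega⟩, σ)
        = (⟨m+1, by omega⟩, fun w => if w.val < T+1 then !σ w else σ w) := by
      rw [Function.iterate_succ_apply', htrajT, stepD_at m B T hc]
      refine Prod.ext ?_ ?_
      · show (if _ != B.testBit T then _ else _) = _
        rw [hτ, hσ T hc, hT0]
        cases hB : B.testBit T <;> rfl
      · show Function.update _ _ _ = _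
        exact update_tog m σ T hc _ (by rw [hτ])
    refine ⟨⟨T+1, by rw [hstep, if_neg hnall]⟩, ?_⟩
    intro j hj
    have hex : ∃ K, Absorbing (g0 m B) (g1 m B)
        (((stepD (g0 m B) (g1 m B))^[K] (⟨0, by omega⟩, σ)).1) :=
      ⟨T+1, by rw [hstep]; exact abs_of_ge m B _ (by exact Nat.le_succ m)⟩
    have hfind : Nat.find hex = T + 1 := by
      rw [Nat.find_eq_iff]
      constructor
      · rw [hstep]; exact abs_of_ge m B _ (by exact Nat.le_succ m)
      · intro t ht
        have htr := traj m B σ N hσ t (by omega) (fun j hj => hTb j (by omega))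
        rw [htr]
        exact not_abs m B t (by omega)
    rw [ballFinal, dif_pos hex, hfind, hstep]
    show (if ((⟨j, by omega⟩ : Fin (m+2)).val < T+1) then !σ ⟨j, by omega⟩
        else σ ⟨j, by omega⟩) = _
    rw [succ_testBit N T hTb hT0 j, hσ j hj]
    by_cases hjT : j ≤ T
    · rw [if_pos (show ((⟨j, by omega⟩ : Fin (m+2)).val < T+1) from by
        show j < T+1; omega), if_pos hjT, bnot_bne]
    · rw [if_neg (show ¬ ((⟨j, by omega⟩ : Fin (m+2)).val < T+1) from by
        show ¬ j < T+1; omega), if_neg hjT]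
  · -- reaches D at step m
    have hall : ∀ j, j < m → N.testBit j = true := fun j hj => hTb j (by omega)
    have htraj := traj m B σ N hσ m le_rfl hall
    refine ⟨⟨m, by rw [htraj, if_pos hall]⟩, ?_⟩
    intro j hj
    have hex : ∃ K, Absorbing (g0 m B) (g1 m B)
        (((stepD (g0 m B) (g1 m B))^[K] (⟨0, by omega⟩, σ)).1) :=
      ⟨m, by rw [htraj]; exact abs_of_ge m B _ le_rfl⟩
    have hfind : Nat.find hex = m := by
      rw [Nat.find_eq_iff]
      constructor
      · rw [htraj]; exact abs_of_ge m B _ le_rfl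
      · intro t ht
        have htr := traj m B σ N hσ t (by omega) (fun j hj => hall j (by omega))
        rw [htr]
        exact not_abs m B t (by omega)
    rw [ballFinal, dif_pos hex, hfind, htraj]
    show (if ((⟨j, by omega⟩ : Fin (m+2)).val < m) then !σ ⟨j, by omega⟩
        else σ ⟨j, by omega⟩) = _
    rw [succ_testBit N T hTb hT0 j, hσ j hj]
    rw [if_pos (show ((⟨j, by omega⟩ : Fin (m+2)).val < m) from hj),
      if_pos (show j ≤ T by omega), bnot_bne]

lemma sigma_inv (m B : ℕ) (i : ℕ) :
    ∀ j (hj : j < m), sigmaAfter (g0 m B) (g1 m B) ⟨0, by omega⟩ i ⟨j, by omega⟩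
      = ((B+i).testBit j != B.testBit j) := by
  induction i with
  | zero => intro j hj; simp [sigmaAfter]
  | succ i ih =>
    intro j hj
    have h := (ball_aux m B (sigmaAfter (g0 m B) (g1 m B) ⟨0, by omega⟩ i) (B+i) ih).2 j hj
    show ballFinal (g0 m B) (g1 m B) ⟨0, by omega⟩
      (sigmaAfter (g0 m B) (g1 m B) ⟨0, by omega⟩ i) ⟨j, by omega⟩ = _
    rw [h]
    rfl

end DigicompAux


/-- Acyclic Digicomp counters: for every `k ≥ 1` there is an acyclic switch graph on at
most `⌊log₂ k⌋ + 3` vertices with an entry vertex `c` and distinct absorbing vertices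
`F` and `D` such that, releasing balls sequentially from `c`, each of the first `k - 1`
balls stops at `F` and the `k`-th ball stops at `D`. -/
theorem acyclic_digicomp_counter (k : ℕ) (hk : 1 ≤ k) :
    ∃ n : ℕ, n ≤ Nat.log 2 k + 3 ∧
      ∃ (s0 s1 : Fin n → Fin n), IsAcyclicSG s0 s1 ∧
        ∃ (c F D : Fin n), F ≠ D ∧
          Absorbing s0 s1 F ∧ Absorbing s0 s1 D ∧
          (∀ i, i < k - 1 → ∃ K, (ballConfig s0 s1 c i K).1 = F) ∧
          (∃ K, (ballConfig s0 s1 c (k - 1) K).1 = D) := by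
  classical
  set m := Nat.log 2 k + 1 with hm
  have hk2 : k < 2^m := Nat.lt_pow_succ_log_self (by norm_num) k
  set B := 2^m - k with hB
  refine ⟨m + 2, by omega, DigicompAux.g0 m B, DigicompAux.g1 m B, DigicompAux.acyc m B,
    ⟨0, by omega⟩, ⟨m+1, by omega⟩, ⟨m, by omega⟩, ?_,
    DigicompAux.abs_of_ge m B _ (by exact Nat.le_succ m),
    DigicompAux.abs_of_ge m B _ le_rfl, ?_, ?_⟩
  · intro h
    have := congrArg Fin.val h
    simp at this
  · intro i hi
    have hinv := DigicompAux.sigma_inv m B i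
    have hstop := (DigicompAux.ball_aux m B (sigmaAfter (DigicompAux.g0 m B) (DigicompAux.g1 m B) ⟨0, by omega⟩ i) (B+i) hinv).1
    have hnall : ¬ (∀ j, j < m → (B+i).testBit j = true) := by
      intro hall
      have := DigicompAux.ge_of_all_bits (B+i) m hall
      omega
    rw [if_neg hnall] at hstop
    exact hstop
  · have hinv := DigicompAux.sigma_inv m B (k-1)
    have hstop := (DigicompAux.ball_aux m B (sigmaAfter (DigicompAux.g0 m B) (DigicompAux.g1 m B) ⟨0, by omega⟩ (k-1)) (B+(k-1)) hinv).1
    have hall : ∀ j, j < m → (B+(k-1)).testBit j = true := by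
      intro j hj
      have he : B + (k-1) = 2^m - 1 := by omega
      rw [he, Nat.testBit_two_pow_sub_one]
      simp [hj]
    rw [if_pos hall] at hstop
    exact hstop
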